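/- Let k be a field, G a group, and Γ a normal subgroup of G. Then the kernel of the k-algebra homomorphism k[G] → k[G/Γ] induced by the quotient map G → G/Γ equals the left ideal of k[G] generated by {γ − 1 : γ ∈ Γ}, and this left ideal is a two-sided ideal. Moreover, if k has characteristic p > 0 and Γ is a finite p-group, then this kernel is a nilpotent ideal. -/

import Mathlib

open MonoidAlgebra Pointwise

section Aux

variable {k : Type*} [Field k] {G : Type*} [Group G]

/-- The generating set `{γ - 1 : γ ∈ Γ}`. -/
private def SS (k : Type*) [Field k] {G : Type*} [Group G] (Γ : Subgroup G) :
    Set (MonoidAlgebra k G) :=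
  {a : MonoidAlgebra k G | ∃ γ ∈ Γ, a = MonoidAlgebra.of k G γ - 1}

/-- The `k`-span of `{g(γ-1)}`. -/
private noncomputable def DD (k : Type*) [Field k] {G : Type*} [Group G] (Γ : Subgroup G) :
    Submodule k (MonoidAlgebra k G) :=
  Submodule.span k {a | ∃ g : G, ∃ γ ∈ Γ, a = of k G g * (of k G γ - 1)}

private lemma mul_mem_DD (Γ : Subgroup G) (r : MonoidAlgebra k G) {x : MonoidAlgebra k G}
    (hx : x ∈ DD k Γ) : r * x ∈ DD k Γ := by
  induction hx using Submodule.span_induction with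
  | zero => simpa using zero_mem (DD k Γ)
  | add a b _ _ ha hb => rw [mul_add]; exact add_mem ha hb
  | smul c a _ ha => rw [mul_smul_comm]; exact Submodule.smul_mem _ _ ha
  | mem a ha =>
    obtain ⟨g, γ, hγ, rfl⟩ := ha
    induction r using MonoidAlgebra.induction_linear with
    | zero => simpa using zero_mem (DD k Γ)
    | add f g hf hg => rw [add_mul]; exact add_mem hf hg
    | single b c =>
      have hb : (MonoidAlgebra.single b c : MonoidAlgebra k G) = c • of k G b := by
        simp [of_apply, Finsupp.smul_single]
      rw [hb, smul_mul_assoc, ← mul_assoc, ← map_mul]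
      exact Submodule.smul_mem _ _ (Submodule.subset_span ⟨b * g, γ, hγ, rfl⟩)

private lemma span_SS_eq_DD (Γ : Subgroup G) :
    (Ideal.span (SS k Γ)).restrictScalars k = DD k Γ := by
  apply le_antisymm
  · intro x hx
    simp only [Submodule.restrictScalars_mem] at hx
    let E : Ideal (MonoidAlgebra k G) :=
      { carrier := (DD k Γ : Set (MonoidAlgebra k G))
        zero_mem' := zero_mem _
        add_mem' := fun h1 h2 => add_mem h1 h2
        smul_mem' := fun r x hx => by
          simpa [smul_eq_mul] using mul_mem_DD Γ r hx }
    have hle : Ideal.span (SS k Γ) ≤ E := by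
      rw [Ideal.span_le]
      rintro a ⟨γ, hγ, rfl⟩
      show of k G γ - 1 ∈ DD k Γ
      have : of k G γ - 1 = of k G 1 * (of k G γ - 1) := by rw [map_one, one_mul]
      rw [this]
      exact Submodule.subset_span ⟨1, γ, hγ, rfl⟩
    exact hle hx
  · rw [DD, Submodule.span_le]
    rintro a ⟨g, γ, hγ, rfl⟩
    simp only [SetLike.mem_coe, Submodule.restrictScalars_mem]
    exact Ideal.mul_mem_left _ _ (Ideal.subset_span ⟨γ, hγ, rfl⟩)

private noncomputable def retr (k : Type*) [Field k] {G : Type*} [Group G] (Γ : Subgroup G) [Γ.Normal] :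
    MonoidAlgebra k G → MonoidAlgebra k G :=
  MonoidAlgebra.mapDomain (fun g : G => Quotient.out ((QuotientGroup.mk' Γ) g))

private lemma ker_eq_span (Γ : Subgroup G) [Γ.Normal] :
    RingHom.ker (MonoidAlgebra.mapDomainRingHom k (QuotientGroup.mk' Γ)) =
      Ideal.span (SS k Γ) := by
  apply le_antisymm
  · intro x hx
    have hx0 : MonoidAlgebra.mapDomain (⇑(QuotientGroup.mk' Γ)) x = (0 : MonoidAlgebra k (G ⧸ Γ)) :=
      hx
    have key : ∀ y : MonoidAlgebra k G, y - retr k Γ y ∈ Ideal.span (SS k Γ) := by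
      intro y
      induction y using MonoidAlgebra.induction_linear with
      | zero =>
        have h0 : retr k Γ (0 : MonoidAlgebra k G) = 0 := MonoidAlgebra.mapDomain_zero _
        rw [h0, sub_zero]
        exact zero_mem _
      | add f g hf hg =>
        have hadd : retr k Γ (f + g) = retr k Γ f + retr k Γ g := MonoidAlgebra.mapDomain_add _ _ _
        rw [hadd, add_sub_add_comm]
        exact add_mem hf hg
      | single g c =>
        set a : G := Quotient.out ((QuotientGroup.mk' Γ) g) with ha
        have hs : retr k Γ (MonoidAlgebra.single g c) = MonoidAlgebra.single a c :=
          MonoidAlgebra.mapDomain_single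
        have hmem : a⁻¹ * g ∈ Γ := by
          have h1 : ((a : G) : G ⧸ Γ) = ((g : G) : G ⧸ Γ) := QuotientGroup.out_eq' _
          exact QuotientGroup.eq.mp h1
        have hrw : (MonoidAlgebra.single g c : MonoidAlgebra k G) - MonoidAlgebra.single a c =
            MonoidAlgebra.single a c * (of k G (a⁻¹ * g) - 1) := by
          rw [mul_sub, mul_one, of_apply, MonoidAlgebra.single_mul_single, mul_one,
            mul_inv_cancel_left]
        show (MonoidAlgebra.single g c : MonoidAlgebra k G) - retr k Γ (MonoidAlgebra.single g c)
          ∈ Ideal.span (SS k Γ)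
        rw [hs, hrw]
        exact Ideal.mul_mem_left _ _ (Ideal.subset_span ⟨a⁻¹ * g, hmem, rfl⟩)
    have hkey := key x
    have hcomp : retr k Γ x =
        MonoidAlgebra.mapDomain (Quotient.out (s := QuotientGroup.leftRel Γ))
          (MonoidAlgebra.mapDomain (⇑(QuotientGroup.mk' Γ)) x) := MonoidAlgebra.ext Finsupp.mapDomain_comp
    rw [hcomp, hx0] at hkey
    have hz : MonoidAlgebra.mapDomain (Quotient.out (s := QuotientGroup.leftRel Γ))
        (0 : MonoidAlgebra k (G ⧸ Γ)) = (0 : MonoidAlgebra k G) := MonoidAlgebra.mapDomain_zero _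
    rw [hz, sub_zero] at hkey
    exact hkey
  · rw [Ideal.span_le]
    rintro b ⟨γ, hγ, rfl⟩
    simp only [SetLike.mem_coe, RingHom.mem_ker, map_sub, map_one]
    have h1 : (MonoidAlgebra.mapDomainRingHom k (QuotientGroup.mk' Γ)) (of k G γ) =
        (MonoidAlgebra.single ((QuotientGroup.mk' Γ) γ) 1 : MonoidAlgebra k (G ⧸ Γ)) :=
      MonoidAlgebra.mapDomain_single
    have hγ1 : (QuotientGroup.mk' Γ) γ = 1 := by
      simpa using (QuotientGroup.eq_one_iff γ).mpr hγ
    rw [h1, hγ1, ← MonoidAlgebra.one_def, sub_self]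

private lemma charP_MA (p : ℕ) [CharP k p] : CharP (MonoidAlgebra k G) p := by
  have hinj : Function.Injective (algebraMap k (MonoidAlgebra k G)) := by
    intro a b h
    have := congrArg (fun f : MonoidAlgebra k G => f.coeff 1) h
    simpa [MonoidAlgebra.coe_algebraMap] using this
  exact charP_of_injective_algebraMap hinj p

private lemma pairwise_all {α : Type*} {R : α → α → Prop} (h : ∀ a b, R a b) :
    ∀ l : List α, l.Pairwise R := by
  intro l; induction l with
  | nil => simp
  | cons a l ih => exact List.Pairwise.cons (fun b _ => h a b) ih

private lemma prod_zero_of_replicate {A : Type*} [Ring A] {l : List A} {z : A} {q : ℕ}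
    (hsub : (List.replicate q z).Sublist l) (hz : z ^ q = 0)
    (hcomm : l.Pairwise Commute) : l.prod = 0 := by
  obtain ⟨rest, hperm⟩ := hsub.exists_perm_append
  rw [hperm.prod_eq' hcomm, List.prod_append, List.prod_replicate, hz, zero_mul]

private lemma exists_count_ge {α : Type*} [Fintype α] [DecidableEq α] {q : ℕ} (m : List α)
    (h : Fintype.card α * (q - 1) < m.length) : ∃ a, q ≤ m.count a := by
  by_contra hc
  push_neg at hc
  have hlen : m.length = ∑ a ∈ m.toFinset, m.count a := by
    have := Multiset.toFinset_sum_count_eq (m : Multiset α)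
    simpa using this.symm
  have hb : ∑ a ∈ m.toFinset, m.count a ≤ m.toFinset.card * (q - 1) := by
    calc ∑ a ∈ m.toFinset, m.count a ≤ ∑ _a ∈ m.toFinset, (q - 1) :=
          Finset.sum_le_sum (fun a _ => by have := hc a; omega)
      _ = m.toFinset.card * (q - 1) := by rw [Finset.sum_const, smul_eq_mul]
  have hcard : m.toFinset.card ≤ Fintype.card α := Finset.card_le_univ _
  have : m.length ≤ Fintype.card α * (q - 1) := by
    rw [hlen]
    exact hb.trans (Nat.mul_le_mul_right _ hcard)
  omega

/-- Pushing group coefficients to the left through a product of generators. -/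
private lemma push_left (N : Subgroup G) [N.Normal] :
    ∀ l : List (MonoidAlgebra k G),
      (∀ x ∈ l, ∃ g : G, ∃ ν ∈ N, x = of k G g * (of k G ν - 1)) →
      ∃ g : G, ∃ m : List G, (∀ ν ∈ m, ν ∈ N) ∧ m.length = l.length ∧
        l.prod = of k G g * (m.map (fun ν => of k G ν - 1)).prod := by
  intro l
  induction l with
  | nil =>
    refine fun _ => ⟨1, [], by simp, by simp, ?_⟩
    rw [List.prod_nil, List.map_nil, List.prod_nil, map_one, one_mul]
  | cons x l ih =>
    intro hl
    obtain ⟨h, ν, hν, rfl⟩ := hl x List.mem_cons_self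
    obtain ⟨g, m, hm, hlen, hprod⟩ := ih (fun y hy => hl y (List.mem_cons_of_mem _ hy))
    refine ⟨h * g, (g⁻¹ * ν * g) :: m, ?_, by simp [hlen], ?_⟩
    · rintro μ hμ
      rcases List.mem_cons.mp hμ with rfl | hμ
      · simpa using Subgroup.Normal.conj_mem ‹N.Normal› ν hν g⁻¹
      · exact hm μ hμ
    · have hswap : (of k G ν - 1) * of k G g = of k G g * (of k G (g⁻¹ * ν * g) - 1) := by
        rw [sub_mul, mul_sub, one_mul, mul_one, ← map_mul, ← map_mul,
          show ν * g = g * (g⁻¹ * ν * g) by group]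
      calc (of k G h * (of k G ν - 1)) * l.prod
          = of k G h * ((of k G ν - 1) * (of k G g *
              (m.map (fun ν => of k G ν - 1)).prod)) := by rw [hprod, mul_assoc]
        _ = of k G h * (of k G g * ((of k G (g⁻¹ * ν * g) - 1) *
              (m.map (fun ν => of k G ν - 1)).prod)) := by
            rw [← mul_assoc (of k G ν - 1), hswap, mul_assoc]
        _ = of k G (h * g) * (((g⁻¹ * ν * g) :: m).map (fun ν => of k G ν - 1)).prod := by
            rw [map_mul (of k G) h g, List.map_cons, List.prod_cons, ← mul_assoc]
      
private lemma pow_le_pow_of_le {M N : Submodule k (MonoidAlgebra k G)} (h : M ≤ N) :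
    ∀ t : ℕ, M ^ t ≤ N ^ t := by
  intro t
  induction t with
  | zero => simp
  | succ t ih => rw [pow_succ, pow_succ]; exact mul_le_mul' ih h

private lemma listProd_mem_pow (M : Submodule k (MonoidAlgebra k G)) :
    ∀ l : List (MonoidAlgebra k G), (∀ x ∈ l, x ∈ M) → l.prod ∈ M ^ l.length := by
  intro l
  induction l with
  | nil =>
    intro _
    rw [List.length_nil, pow_zero, List.prod_nil]
    exact Submodule.one_le.mp le_rfl
  | cons a l ih =>
    intro hal
    rw [List.prod_cons, List.length_cons, pow_succ']
    exact Submodule.mul_mem_mul (hal a List.mem_cons_self)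
      (ih (fun x hx => hal x (List.mem_cons_of_mem _ hx)))

private lemma abelian_nilpotent (p : ℕ) [Fact p.Prime] [CharP k p] (N : Subgroup G) [N.Normal]
    [Finite N] (hcomm : ∀ ν ∈ N, ∀ μ ∈ N, ν * μ = μ * ν) (e : ℕ)
    (hpow : ∀ ν ∈ N, ν ^ p ^ e = 1) :
    ∃ t : ℕ, 0 < t ∧ DD k N ^ t = ⊥ := by
  haveI : CharP (MonoidAlgebra k G) p := charP_MA p
  classical
  haveI : Fintype N := Fintype.ofFinite _
  have hq0 : 0 < p ^ e := pow_pos (Nat.Prime.pos Fact.out) e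
  refine ⟨Fintype.card N * (p ^ e - 1) + 1, Nat.succ_pos _, ?_⟩
  rw [DD, Submodule.span_pow]
  apply le_bot_iff.mp
  rw [Submodule.span_le]
  intro x hx
  obtain ⟨f, hf⟩ := Set.mem_pow.mp hx
  set l : List (MonoidAlgebra k G) := List.ofFn (fun i => ((f i : MonoidAlgebra k G))) with hl
  have hlp : ∀ y ∈ l, ∃ g : G, ∃ ν ∈ N, y = of k G g * (of k G ν - 1) := by
    intro y hyl
    rw [hl, List.mem_ofFn] at hyl
    obtain ⟨i, rfl⟩ := hyl
    exact (f i).2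
  obtain ⟨g, m, hm, hlen, hprod⟩ := push_left N l hlp
  have hlenm : m.length = Fintype.card N * (p ^ e - 1) + 1 := by
    rw [hlen, hl, List.length_ofFn]
  set m' : List N := m.pmap (fun a h => (⟨a, h⟩ : N)) hm with hm'
  have hcard : Fintype.card N * (p ^ e - 1) < m'.length := by
    rw [hm', List.length_pmap, hlenm]; omega
  obtain ⟨ν₀, hν₀⟩ := exists_count_ge m' hcard
  set gen : N → MonoidAlgebra k G := fun ν => of k G (ν : G) - 1 with hgen
  have hmap : m.map (fun ν => of k G ν - 1) = m'.map gen := by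
    rw [hm', List.map_pmap]
    exact (List.pmap_eq_map _).symm
  have hcommute : ∀ a b : N, Commute (gen a) (gen b) := by
    intro a b
    have hof : Commute (of k G (a : G)) (of k G (b : G)) := by
      show of k G (a : G) * of k G (b : G) = of k G (b : G) * of k G (a : G)
      rw [← map_mul, ← map_mul, hcomm _ a.2 _ b.2]
    exact Commute.sub_left (hof.sub_right (Commute.one_right _)) (Commute.one_left _)
  have hpair : (m'.map gen).Pairwise Commute := by
    rw [List.pairwise_map]
    exact pairwise_all (fun a b => hcommute a b) m'
  have hz : gen ν₀ ^ p ^ e = 0 := by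
    have hc : Commute (of k G (ν₀ : G)) 1 := Commute.one_right _
    rw [hgen]
    show (of k G (ν₀ : G) - 1) ^ p ^ e = 0
    rw [sub_pow_char_pow_of_commute p e hc, ← map_pow, hpow _ ν₀.2, map_one, one_pow, sub_self]
  have hsub : (List.replicate (p ^ e) (gen ν₀)).Sublist (m'.map gen) := by
    have h1 : (List.replicate (p ^ e) ν₀).Sublist m' :=
      (@List.replicate_sublist_iff _ instBEqOfDecidableEq _ _ _ _).mpr hν₀
    have h2 := h1.map gen
    rwa [List.map_replicate] at h2
  have hzero : (m'.map gen).prod = 0 := prod_zero_of_replicate hsub hz hpair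
  have hx0 : x = 0 := by
    rw [← hf]
    show l.prod = 0
    rw [hprod, hmap, hzero, mul_zero]
  simp [hx0]

private lemma main_nilpotent (p : ℕ) [Fact p.Prime] [CharP k p] :
    ∀ (c : ℕ) {G : Type*} [Group G] (Γ : Subgroup G) [Γ.Normal] [Finite Γ],
      IsPGroup p Γ → Nat.card Γ ≤ c → ∃ n : ℕ, 0 < n ∧ DD k Γ ^ n = ⊥ := by
  intro c
  induction c with
  | zero =>
    intro G _ Γ _ _ _ hc
    have := Nat.card_pos (α := Γ)
    omega
  | succ c ih =>
    intro G _ Γ _ _ hΓ hc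
    by_cases htriv : ∀ γ ∈ Γ, γ = (1 : G)
    · refine abelian_nilpotent (k := k) p Γ ?_ 0 ?_
      · intro ν hν μ hμ; rw [htriv ν hν, htriv μ hμ]
      · intro ν hν; rw [pow_zero, pow_one]; exact htriv ν hν
    · push_neg at htriv
      obtain ⟨γ₀, hγ₀, hγ₀ne⟩ := htriv
      haveI : Nontrivial Γ := ⟨⟨⟨γ₀, hγ₀⟩, 1, by simp [Subtype.ext_iff, hγ₀ne]⟩⟩
      haveI hZnt : Nontrivial (Subgroup.center Γ) := IsPGroup.center_nontrivial hΓ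
      set N : Subgroup G := (Subgroup.center Γ).map Γ.subtype with hN
      have hNle : N ≤ Γ := Subgroup.map_subtype_le _
      haveI hNnormal : N.Normal := by
        constructor
        rintro x hx g
        obtain ⟨z, hz, rfl⟩ := hx
        refine ⟨⟨g * (z : G) * g⁻¹, Subgroup.Normal.conj_mem ‹Γ.Normal› _ z.2 g⟩,
          Subgroup.mem_center_iff.mpr fun h => ?_, rfl⟩
        have hmemh : g⁻¹ * (h : G) * g ∈ Γ := by
          have h1 := Subgroup.Normal.conj_mem ‹Γ.Normal› _ h.2 g⁻¹
          rwa [inv_inv] at h1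
        have hcz := Subgroup.mem_center_iff.mp hz (⟨g⁻¹ * (h : G) * g, hmemh⟩ : Γ)
        have hcz' : (g⁻¹ * (h : G) * g) * (z : G) = (z : G) * (g⁻¹ * (h : G) * g) :=
          congrArg (fun a : Γ => (a : G)) hcz
        apply Subtype.ext
        show (h : G) * (g * (z : G) * g⁻¹) = (g * (z : G) * g⁻¹) * (h : G)
        calc (h : G) * (g * (z : G) * g⁻¹)
            = g * ((g⁻¹ * (h : G) * g) * (z : G)) * g⁻¹ := by group
          _ = g * ((z : G) * (g⁻¹ * (h : G) * g)) * g⁻¹ := by rw [hcz']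
          _ = (g * (z : G) * g⁻¹) * (h : G) := by group
      haveI : Finite N :=
        Finite.of_injective (Subgroup.inclusion hNle) (Subgroup.inclusion_injective hNle)
      have hNcomm : ∀ ν ∈ N, ∀ μ ∈ N, ν * μ = μ * ν := by
        rintro _ ⟨z, hz, rfl⟩ _ ⟨w, hw, rfl⟩
        have h1 : (w * z : Γ) = z * w := Subgroup.mem_center_iff.mp hz w
        have h2 : (w : G) * (z : G) = (z : G) * (w : G) :=
          congrArg (fun a : Γ => (a : G)) h1
        exact h2.symm
      have hNp : IsPGroup p N := (hΓ.to_subgroup (Subgroup.center Γ)).map Γ.subtype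
      obtain ⟨e, he⟩ := IsPGroup.iff_card.mp hNp
      have hNpow : ∀ ν ∈ N, ν ^ p ^ e = 1 := by
        intro ν hν
        have h1 : (⟨ν, hν⟩ : N) ^ p ^ e = 1 := by rw [← he]; exact pow_card_eq_one'
        have h2 := congrArg (fun a : N => (a : G)) h1
        simpa using h2
      obtain ⟨t, ht0, htN⟩ := abelian_nilpotent (k := k) p N hNcomm e hNpow
      set π := QuotientGroup.mk' N with hπ
      set Γ' : Subgroup (G ⧸ N) := Γ.map π with hΓ'
      haveI : Γ'.Normal := Subgroup.Normal.map ‹Γ.Normal› π (QuotientGroup.mk'_surjective N)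
      haveI : Finite Γ' := Finite.of_surjective _ (MonoidHom.subgroupMap_surjective π Γ)
      have hΓ'p : IsPGroup p Γ' := hΓ.map π
      set ψ := π.subgroupMap Γ with hψ
      have hψsurj := MonoidHom.subgroupMap_surjective π Γ
      have hcardeq : Nat.card Γ = Nat.card Γ' * Nat.card ψ.ker := by
        have h1 := Subgroup.card_eq_card_quotient_mul_card_subgroup (ψ.ker)
        have h2 : Nat.card (Γ ⧸ ψ.ker) = Nat.card Γ' :=
          Nat.card_congr (QuotientGroup.quotientKerEquivOfSurjective ψ hψsurj).toEquiv
        rw [h1, h2]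
      obtain ⟨z, hzne⟩ := exists_ne (1 : Subgroup.center Γ)
      have hzker : ((z : Γ)) ∈ ψ.ker := by
        rw [MonoidHom.mem_ker]
        apply Subtype.ext
        show π (((z : Γ) : G)) = 1
        exact (QuotientGroup.eq_one_iff _).mpr ⟨(z : Γ), z.2, rfl⟩
      haveI : Nontrivial ψ.ker := by
        refine ⟨⟨⟨(z : Γ), hzker⟩, 1, ?_⟩⟩
        simp only [ne_eq, Subtype.ext_iff]
        intro hcon
        apply hzne
        apply Subtype.ext
        simpa using hcon
      have h2 : 1 < Nat.card ψ.ker := Finite.one_lt_card_iff_nontrivial.mpr ‹_›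
      have hΓ'pos : 0 < Nat.card Γ' := Nat.card_pos
      have hlt : Nat.card Γ' < Nat.card Γ := by
        calc Nat.card Γ' < Nat.card Γ' * Nat.card ψ.ker := by
              have := hΓ'pos
              nlinarith
          _ = Nat.card Γ := hcardeq.symm
      obtain ⟨m, hm0, hmΓ'⟩ := ih Γ' hΓ'p (by omega)
      set φ := MonoidAlgebra.mapDomainAlgHom k k π with hφ
      have hofg : ∀ u : G, φ (of k G u) = of k (G ⧸ N) (π u) := fun u =>
        MonoidAlgebra.mapDomain_single
      have hmapDD : Submodule.map φ.toLinearMap (DD k Γ) ≤ DD k Γ' := by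
        rw [DD, Submodule.map_span, Submodule.span_le]
        rintro _ ⟨a, ⟨g, γ, hγ, rfl⟩, rfl⟩
        refine Submodule.subset_span ⟨π g, π γ, ⟨γ, hγ, rfl⟩, ?_⟩
        show φ (of k G g * (of k G γ - 1)) = _
        rw [map_mul, map_sub, map_one, hofg, hofg]
      have hDDle : DD k Γ ^ m ≤ DD k N := by
        intro x hx
        have hφx : φ x ∈ (DD k Γ') ^ m := by
          have h1 : φ x ∈ Submodule.map φ.toLinearMap (DD k Γ ^ m) := ⟨x, hx, rfl⟩
          rw [Submodule.map_pow] at h1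
          exact pow_le_pow_of_le hmapDD m h1
        rw [hmΓ', Submodule.mem_bot] at hφx
        have hker : (MonoidAlgebra.mapDomainRingHom k π) x = 0 := hφx
        have hspan : x ∈ Ideal.span (SS k N) := by
          rw [← ker_eq_span N]
          exact hker
        have hres : x ∈ (Ideal.span (SS k N)).restrictScalars k := hspan
        rw [span_SS_eq_DD N] at hres
        exact hres
      refine ⟨m * t, Nat.mul_pos hm0 ht0, ?_⟩
      apply le_bot_iff.mp
      calc DD k Γ ^ (m * t) = (DD k Γ ^ m) ^ t := pow_mul _ m t
        _ ≤ DD k N ^ t := pow_le_pow_of_le hDDle t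
        _ = ⊥ := htN

end Aux

/-- Let `k` be a field, `G` a group and `Γ` a normal subgroup of `G`. The
kernel of the induced algebra map `k[G] → k[G/Γ]` is the left ideal generated by
`{γ - 1 : γ ∈ Γ}`, and this left ideal is two-sided. Moreover, if `char k = p > 0` and `Γ`
is a finite `p`-group, then this kernel is a nilpotent ideal (some power of it, i.e. all
products of some fixed number `n ≥ 1` of its elements, vanish). -/
theorem ker_mapDomain_eq_span_and_nilpotent
    {k : Type*} [Field k] {G : Type*} [Group G] (Γ : Subgroup G) [Γ.Normal] :
    RingHom.ker (MonoidAlgebra.mapDomainRingHom k (QuotientGroup.mk' Γ)) =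
      Ideal.span {a : MonoidAlgebra k G | ∃ γ ∈ Γ, a = MonoidAlgebra.of k G γ - 1} ∧
    (∀ a ∈ Ideal.span {a : MonoidAlgebra k G | ∃ γ ∈ Γ, a = MonoidAlgebra.of k G γ - 1},
      ∀ r : MonoidAlgebra k G,
        a * r ∈ Ideal.span {a : MonoidAlgebra k G | ∃ γ ∈ Γ, a = MonoidAlgebra.of k G γ - 1}) ∧
    (∀ p : ℕ, p.Prime → CharP k p → Finite Γ → IsPGroup p Γ →
      ∃ n : ℕ, 0 < n ∧ ∀ f : Fin n → MonoidAlgebra k G,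
        (∀ i : Fin n,
          f i ∈ RingHom.ker (MonoidAlgebra.mapDomainRingHom k (QuotientGroup.mk' Γ))) →
        (List.ofFn f).prod = 0) := by
  refine ⟨ker_eq_span Γ, ?_, ?_⟩
  · intro a ha r
    have ha' : a ∈ Ideal.span (SS k Γ) := ha
    rw [← ker_eq_span Γ, RingHom.mem_ker] at ha'
    have h2 : a * r ∈ RingHom.ker (MonoidAlgebra.mapDomainRingHom k (QuotientGroup.mk' Γ)) := by
      rw [RingHom.mem_ker, map_mul, ha', zero_mul]
    rw [ker_eq_span Γ] at h2
    exact h2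
  · intro p hp hchar hfin hpg
    haveI := Fact.mk hp
    haveI := hchar
    haveI := hfin
    obtain ⟨n, hn0, hn⟩ := main_nilpotent (k := k) p (Nat.card ↥Γ) Γ hpg le_rfl
    refine ⟨n, hn0, fun f hf => ?_⟩
    have hmem : ∀ x ∈ List.ofFn f, x ∈ DD k Γ := by
      intro x hx
      rw [List.mem_ofFn] at hx
      obtain ⟨i, rfl⟩ := hx
      have h1 := hf i
      rw [ker_eq_span Γ] at h1
      have h2 : f i ∈ (Ideal.span (SS k Γ)).restrictScalars k := h1
      rw [span_SS_eq_DD Γ] at h2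
      exact h2
    have hfin2 := listProd_mem_pow (DD k Γ) (List.ofFn f) hmem
    rw [List.length_ofFn, hn, Submodule.mem_bot] at hfin2
    exact hfin2
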